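/- Let n be an integer with n ≥ 2, let y be a positive real number satisfying y² = n·y + 2, and let θ be a complex root of unity (i.e., θ^k = 1 for some positive integer k). Then n·y ≠ −2·(θ + θ⁻¹) (as complex numbers). -/

import Mathlib

/-- If `n ≥ 2`, `y > 0` is the positive root of `y² = n·y + 2`, and `θ` is a root of
unity, then `n·y ≠ -2·(θ + θ⁻¹)` as complex numbers. -/
theorem stmt_5 (n : ℤ) (hn : 2 ≤ n) (y : ℝ) (hy : 0 < y)
    (heq : y ^ 2 = n * y + 2) (θ : ℂ) (hθ : ∃ k : ℕ, 0 < k ∧ θ ^ k = 1) :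
    (n : ℂ) * (y : ℂ) ≠ -2 * (θ + θ⁻¹) := by
  obtain ⟨k, hk, hθk⟩ := hθ
  have habs : ‖θ‖ = 1 := by
    have h1 : (‖θ‖) ^ k = 1 := by
      rw [← norm_pow, hθk, norm_one]
    rcases lt_trichotomy (‖θ‖) 1 with h|h|h
    · exfalso; nlinarith [pow_lt_one₀ (norm_nonneg θ) h hk.ne']
    · exact h
    · exfalso; nlinarith [one_lt_pow₀ h hk.ne']
  have hy2 : 2 < y := by
    by_contra h
    push_neg at h
    have hn' : (2 : ℝ) ≤ (n : ℝ) := by exact_mod_cast hn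
    nlinarith
  have hny : 4 < (n : ℝ) * y := by
    have hn' : (2 : ℝ) ≤ (n : ℝ) := by exact_mod_cast hn
    nlinarith
  intro h
  have h1 : ‖(n : ℂ) * y‖ = ‖-2 * (θ + θ⁻¹)‖ := by rw [h]
  have h2 : ‖(n : ℂ) * y‖ = (n : ℝ) * y := by
    rw [show ((n : ℂ) * y) = (((n : ℝ) * y : ℝ) : ℂ) by push_cast; ring,
      Complex.norm_real, Real.norm_eq_abs, abs_of_pos (by linarith)]
  have h3 : ‖-2 * (θ + θ⁻¹)‖ ≤ 4 := by
    have : ‖θ + θ⁻¹‖ ≤ 2 := by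
      calc ‖θ + θ⁻¹‖ ≤ ‖θ‖ + ‖θ⁻¹‖ :=
            norm_add_le _ _
        _ = 2 := by rw [norm_inv, habs]; norm_num
    calc ‖-2 * (θ + θ⁻¹)‖ = 2 * ‖θ + θ⁻¹‖ := by
          rw [norm_mul]; norm_num
      _ ≤ 4 := by linarith
  linarith [h2 ▸ h1 ▸ h3]
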